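/- Let $W_g$ be the finite Weyl group of type $C_g$ inside the affine Weyl group of type $\tilde{C}_g$ with simple affine reflections $s_0, s_1, \dots, s_g$. For $0 \le c \le g/2$ let $W_{\{c,g-c\}}$ be the subgroup generated by all $s_i$ with $i \notin \{c, g-c\}$, and let $W_c \subset W_g$ be embedded via $s_{c+1-i} \mapsto s_{g+1-i}$. Then $W_{g,\mathrm{final}} \cap W_{\{c,g-c\}} = W_{c,\mathrm{final}}$, i.e., the final elements of $W_g$ lying in $W_{\{c,g-c\}}$ are exactly the images of the final elements of $W_c$. -/

import Mathlib

/-!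
STATEMENT 3: Inside the affine Weyl group `W_g^a` of type `C̃_g`, with simple affine
reflections `s_0, s_1, …, s_g` (indexed by `Fin (g+1)`, Coxeter matrix: `m(s_i,s_{i+1}) = 3`
for `1 ≤ i ≤ g-2`, `m(s_0,s_1) = m(s_{g-1},s_g) = 4`, and `m(s_i,s_j) = 2` for `|i-j| ≥ 2`),
the finite Weyl group `W_g` of type `C_g` is the subgroup generated by `s_1, …, s_g`.
For `0 ≤ c ≤ g/2`, let `W_{{c,g-c}}` be the subgroup generated by all `s_i` with
`i ∉ {c, g-c}`, and let `W_c ⊆ W_g` be embedded via `s_{c+1-i} ↦ s_{g+1-i}`, so that its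
image is the subgroup generated by `s_{g-c+1}, …, s_g`, and the image of the final elements
`W_{c,final}` is the set of minimal length representatives of the cosets of
`⟨s_{g-c+1}, …, s_{g-1}⟩` in that image.  Then
`W_{g,final} ∩ W_{{c,g-c}} = W_{c,final}` (as subsets of the affine Weyl group).
-/

open CoxeterSystem

variable {W : Type*} [Group W] {g : ℕ} {M : CoxeterMatrix (Fin (g + 1))}

/-- The subgroup generated by the simple reflections `s_i` with `i ∈ T`. -/
def genBy (cs : CoxeterSystem M W) (T : Set ℕ) : Subgroup W :=
  Subgroup.closure {x | ∃ i : Fin (g + 1), (i : ℕ) ∈ T ∧ x = cs.simple i}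

/-- The elements of the subgroup `K` of minimal length in their coset modulo the
subgroup `P ≤ K`; for `K` the image of `W_c` and `P` the image of `S_c`, this is the image
of the set of final elements of `W_c`. -/
def finalIn (cs : CoxeterSystem M W) (K P : Subgroup W) : Set W :=
  {w | w ∈ K ∧ ∀ v ∈ K, w⁻¹ * v ∈ P → cs.length w ≤ cs.length v}


open CoxeterSystem List

namespace CoxExchange

variable {B : Type*} {W : Type*} [Group W] {M : CoxeterMatrix B} (cs : CoxeterSystem M W)

local prefix:100 "s" => cs.simple
local prefix:100 "π" => cs.wordProd
local prefix:100 "ℓ" => cs.length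
local prefix:100 "ris" => cs.rightInvSeq

/-- Alternating word `[a, b, a, b, ...]` of length `n`. -/
def altW (a b : B) : ℕ → List B
  | 0 => []
  | (n+1) => a :: altW b a n

@[simp] lemma altW_zero (a b : B) : altW a b 0 = [] := rfl
@[simp] lemma altW_succ (a b : B) (n : ℕ) : altW a b (n+1) = a :: altW b a n := rfl

lemma altW_two_step (a b : B) (n : ℕ) : altW a b (n+2) = a :: b :: altW a b n := rfl

@[simp] lemma altW_length (a b : B) (n : ℕ) : (altW a b n).length = n := by
  induction n generalizing a b with
  | zero => rfl
  | succ n ih => simp [ih]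

/-- The letter of `altW a b` at position `k`. -/
def altL (a b : B) (k : ℕ) : B := if Even k then a else b

lemma altL_succ (a b : B) (k : ℕ) : altL a b (k+1) = altL b a k := by
  simp only [altL, Nat.even_add_one]
  by_cases h : Even k <;> simp [h]

lemma altW_append (a b : B) (k m : ℕ) :
    altW a b (k + m) = altW a b k ++ altW (altL a b k) (altL a b (k+1)) m := by
  induction k generalizing a b with
  | zero => simp [altL]
  | succ k ih =>
      have : k + 1 + m = (k + m) + 1 := by omega
      rw [this, altW_succ, altW_succ, ih b a, cons_append,
        altL_succ a b k, altL_succ a b (k+1)]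

lemma altW_concat (a b : B) (n : ℕ) :
    altW a b (n + 1) = altW a b n ++ [altL a b n] := by
  rw [altW_append a b n 1]
  simp

lemma prod_altW_even (a b : B) (n : ℕ) : π (altW a b (2 * n)) = (s a * s b) ^ n := by
  induction n with
  | zero => simp
  | succ n ih =>
      have : 2 * (n + 1) = (2 * n) + 2 := by omega
      rw [this, altW_two_step, wordProd_cons, wordProd_cons, ih, pow_succ']
      group

lemma prod_altW_odd (a b : B) (n : ℕ) : π (altW a b (2 * n + 1)) = (s a * s b) ^ n * s a := by
  rw [altW_append a b (2*n) 1]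
  rw [wordProd_append, prod_altW_even]
  simp [altL, Nat.even_add_one]

/-- Key dihedral fact: if `(s a * s b) ^ m = 1` then the two alternating words
of length `m` (starting with `a` resp. `b`) have the same product. -/
lemma prod_altW_comm (a b : B) (m : ℕ) (h : (s a * s b) ^ m = 1) :
    π (altW a b m) = π (altW b a m) := by
  have h' : (s b * s a) ^ m = 1 := by
    have : (s b * s a) = (s a * s b)⁻¹ := by
      rw [mul_inv_rev, cs.inv_simple, cs.inv_simple]
    rw [this, inv_pow, h, inv_one]
  rcases Nat.even_or_odd m with ⟨n, rfl⟩ | ⟨n, rfl⟩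
  · have hn : n + n = 2 * n := (two_mul n).symm
    rw [hn] at h h' ⊢
    rw [prod_altW_even, prod_altW_even]
    have e : (s b * s a) ^ n = ((s a * s b) ^ n)⁻¹ := by
      rw [← inv_pow, mul_inv_rev, cs.inv_simple, cs.inv_simple]
    rw [e, eq_inv_iff_mul_eq_one, ← pow_add, ← two_mul]
    exact h
  · rw [prod_altW_odd, prod_altW_odd]
    rw [← mul_inv_eq_one]
    have e1 : ((s b * s a) ^ n * s b)⁻¹ = s b * (s a * s b) ^ n := by
      rw [mul_inv_rev, ← inv_pow, mul_inv_rev, cs.inv_simple, cs.inv_simple]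
    rw [e1]
    calc (s a * s b) ^ n * s a * (s b * (s a * s b) ^ n)
        = (s a * s b) ^ n * (s a * s b) * (s a * s b) ^ n := by group
      _ = (s a * s b) ^ (2 * n + 1) := by rw [← pow_succ, ← pow_add]; ring_nf
      _ = 1 := h

end CoxExchange

namespace CoxExchange

open scoped Classical

variable {B : Type*} {W : Type*} [Group W] {M : CoxeterMatrix B} (cs : CoxeterSystem M W)

local prefix:100 "s" => cs.simple
local prefix:100 "π" => cs.wordProd
local prefix:100 "ℓ" => cs.length
local prefix:100 "ris" => cs.rightInvSeq

/-! ### A counting function avoiding `BEq` -/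

variable {α : Type*}

open scoped Classical in
/-- Number of occurrences of `t` in `l`. -/
noncomputable def cnt (t : α) : List α → ℕ
  | [] => 0
  | a :: l => (if a = t then 1 else 0) + cnt t l

@[simp] lemma cnt_nil (t : α) : cnt t ([] : List α) = 0 := rfl
lemma cnt_cons (t a : α) (l : List α) : cnt t (a :: l) = (if a = t then 1 else 0) + cnt t l := rfl

lemma cnt_append (t : α) (l l' : List α) : cnt t (l ++ l') = cnt t l + cnt t l' := by
  induction l with
  | nil => simp
  | cons a l ih => simp [cnt_cons, ih]; omega

lemma mem_of_cnt_pos {t : α} {l : List α} (h : 0 < cnt t l) : t ∈ l := by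
  induction l with
  | nil => simp at h
  | cons a l ih =>
      rw [cnt_cons] at h
      by_cases ha : a = t
      · simp [ha]
      · simp only [ha, if_false, Nat.zero_add] at h
        exact List.mem_cons_of_mem a (ih h)

lemma cnt_eq_zero_of_not_mem {t : α} {l : List α} (h : t ∉ l) : cnt t l = 0 := by
  induction l with
  | nil => rfl
  | cons a l ih =>
      rw [cnt_cons]
      have ha : a ≠ t := fun e => h (e ▸ List.mem_cons_self)
      have h2 : t ∉ l := fun e => h (List.mem_cons_of_mem a e)
      simp [ha, ih h2]

lemma cnt_eq_one_of_nodup_mem {t : α} {l : List α} (hn : l.Nodup) (hm : t ∈ l) :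
    cnt t l = 1 := by
  induction l with
  | nil => simp at hm
  | cons a l ih =>
      rw [List.nodup_cons] at hn
      rw [cnt_cons]
      rcases List.mem_cons.mp hm with rfl | hm'
      · simp [cnt_eq_zero_of_not_mem hn.1]
      · have ha : a ≠ t := fun e => hn.1 (e ▸ hm')
        simp [ha, ih hn.2 hm']

/-! ### The sign permutation representation -/

/-- The permutation of `W × ZMod 2` associated to the simple reflection `s i`. -/
noncomputable def fperm (i : B) : Equiv.Perm (W × ZMod 2) :=
  Function.Involutive.toPerm
    (fun x => (s i * x.1 * s i, x.2 + if x.1 = s i then 1 else 0))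
    (by
      rintro ⟨t, e⟩
      by_cases h : t = s i
      · subst h
        simp only [cs.simple_mul_simple_self, one_mul, if_pos rfl,
          cs.simple_mul_simple_cancel_right]
        have : s i * s i * s i = s i := by rw [cs.simple_mul_simple_self, one_mul]
        simp [this, add_assoc]
        rfl
      · have h2 : s i * t * s i ≠ s i := by
          intro hh
          apply h
          have := congrArg (fun z => s i * z * s i) hh
          simpa only [cs.simple_mul_simple_cancel_right, ← mul_assoc,
            cs.simple_mul_simple_self, one_mul] using this
        simp only [h, h2, if_false, add_zero]
        rw [Prod.mk.injEq]
        refine ⟨?_, rfl⟩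
        rw [← mul_assoc, ← mul_assoc, cs.simple_mul_simple_self, one_mul,
            mul_assoc, cs.simple_mul_simple_self, mul_one])

lemma fperm_apply (i : B) (t : W) (e : ZMod 2) :
    fperm cs i (t, e) = (s i * t * s i, e + if t = s i then 1 else 0) := rfl

/-- Product of the `fperm`s along a word. -/
noncomputable def Fp (ω : List B) : Equiv.Perm (W × ZMod 2) :=
  (ω.map (fperm cs)).prod

@[simp] lemma Fp_nil : Fp cs ([] : List B) = 1 := rfl

lemma Fp_cons (i : B) (ω : List B) : Fp cs (i :: ω) = fperm cs i * Fp cs ω := by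
  simp [Fp]

lemma Fp_apply (ω : List B) (t : W) (e : ZMod 2) :
    Fp cs ω (t, e) = (π ω * t * (π ω)⁻¹, e + (cnt t (ris ω) : ZMod 2)) := by
  induction ω generalizing e with
  | nil => simp
  | cons i ω ih =>
      rw [Fp_cons, Equiv.Perm.mul_apply, ih, fperm_apply]
      have hris : ris (i :: ω) = ((π ω)⁻¹ * s i * π ω) :: ris ω := rfl
      rw [hris, cnt_cons]
      have hcond : (π ω * t * (π ω)⁻¹ = s i) ↔ ((π ω)⁻¹ * s i * π ω = t) := by
        constructor
        · intro h; rw [← h]; group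
        · intro h; rw [← h]; group
      rw [Prod.mk.injEq]
      refine ⟨?_, ?_⟩
      · simp only [cs.wordProd_cons, mul_inv_rev, cs.inv_simple]
        group
      · push_cast
        rw [if_congr hcond rfl rfl]
        ring

lemma altL_two (a b : B) (k : ℕ) : altL a b (k+2) = altL a b k := by
  rw [altL_succ, altL_succ]

lemma altW_getElem (a b : B) (n k : ℕ) (h : k < n) :
    (altW a b n)[k]'(by simpa using h) = altL a b k := by
  induction k generalizing a b n with
  | zero =>
      obtain ⟨n', rfl⟩ : ∃ n', n = n' + 1 := ⟨n - 1, by omega⟩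
      simp [altL]
  | succ k ih =>
      obtain ⟨n', rfl⟩ : ∃ n', n = n' + 1 := ⟨n - 1, by omega⟩
      have h' : k < n' := by omega
      have : (altW a b (n' + 1))[k+1]'(by simpa using h) = (altW b a n')[k]'(by simpa using h') := by
        simp [altW_succ]
      rw [this, ih b a n' h', altL_succ]

lemma altW_get? (a b : B) (n k : ℕ) (h : k < n) :
    (altW a b n)[k]? = some (altL a b k) := by
  rw [List.getElem?_eq_getElem (by simpa using h)]
  rw [altW_getElem a b n k h]

lemma altW_take (a b : B) (n k : ℕ) (h : k ≤ n) :
    (altW a b n).take k = altW a b k := by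
  have e := altW_append a b k (n - k)
  rw [show k + (n - k) = n by omega] at e
  rw [e, List.take_left' (altW_length a b k)]

lemma altW_drop (a b : B) (n k : ℕ) (h : k ≤ n) :
    (altW a b n).drop k = altW (altL a b k) (altL a b (k+1)) (n - k) := by
  have e := altW_append a b k (n - k)
  rw [show k + (n - k) = n by omega] at e
  rw [e, List.drop_left' (altW_length a b k)]

lemma prod_altW_rel (i j : B) : π (altW i j (2 * (M i j))) = 1 := by
  rw [prod_altW_even, cs.simple_mul_simple_pow]

lemma braid_getD (i j : B) (k : ℕ) (hk : k < 2 * M i j) :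
    (ris (altW i j (2 * M i j))).getD k 1
      = π (altW i j (k+1)) * (π (altW i j k))⁻¹ := by
  have htake : π (altW i j (k+1)) * π ((altW i j (2 * M i j)).drop (k+1)) = 1 := by
    rw [altW_drop i j _ (k+1) (by omega), ← cs.wordProd_append, ← altW_append]
    rw [show k + 1 + (2 * M i j - (k+1)) = 2 * M i j by omega]
    exact prod_altW_rel cs i j
  have hd : π ((altW i j (2 * M i j)).drop (k+1)) = (π (altW i j (k+1)))⁻¹ :=
    (inv_eq_of_mul_eq_one_right htake).symm
  rw [cs.getD_rightInvSeq, altW_get? i j _ k hk, hd, inv_inv]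
  simp only [Option.map_some, Option.getD_some]
  conv_lhs => rw [altW_concat i j k]
  conv_rhs => rw [altW_concat i j k]
  rw [cs.wordProd_append, cs.wordProd_singleton, mul_inv_rev, cs.inv_simple]
  set x := π (altW i j k)
  set y := s (altL i j k)
  rw [mul_assoc (x * y) y (y * x⁻¹), ← mul_assoc y y x⁻¹, cs.simple_mul_simple_self, one_mul]

lemma braid_period (i j : B) (k : ℕ) (hk : k < M i j) :
    (ris (altW i j (2 * M i j))).getD (k + M i j) 1
      = (ris (altW i j (2 * M i j))).getD k 1 := by
  rw [braid_getD cs i j k (by omega), braid_getD cs i j (k + M i j) (by omega)]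
  have e1 : altW i j (k + M i j) = altW i j k ++ altW (altL i j k) (altL i j (k+1)) (M i j) :=
    altW_append i j k (M i j)
  have e2 : altW i j (k + M i j + 1)
      = altW i j (k+1) ++ altW (altL i j (k+1)) (altL i j k) (M i j) := by
    rw [show k + M i j + 1 = (k + 1) + M i j by omega, altW_append i j (k+1) (M i j), altL_two]
  have hcomm : π (altW (altL i j (k+1)) (altL i j k) (M i j))
      = π (altW (altL i j k) (altL i j (k+1)) (M i j)) := by
    apply prod_altW_comm
    by_cases hk2 : Even k
    · have c1 : altL i j k = i := by simp [altL, hk2]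
      have c2 : altL i j (k+1) = j := by simp [altL, Nat.even_add_one, hk2]
      rw [c1, c2]
      exact cs.simple_mul_simple_pow' i j
    · have c1 : altL i j k = j := by simp [altL, hk2]
      have c2 : altL i j (k+1) = i := by simp [altL, Nat.even_add_one, hk2]
      rw [c1, c2]
      exact cs.simple_mul_simple_pow i j
  rw [e1, e2, cs.wordProd_append, cs.wordProd_append, hcomm, mul_inv_rev]
  group

lemma fperm_liftable : M.IsLiftable (fun i => (fperm cs i : Equiv.Perm (W × ZMod 2))) := by
  intro i j
  have hFp : ∀ m : ℕ, Fp cs (altW i j (2*m)) = (fperm cs i * fperm cs j) ^ m := by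
    intro m
    induction m with
    | zero => simp
    | succ m ih =>
        rw [show 2 * (m+1) = (2*m) + 2 by omega, altW_two_step, Fp_cons, Fp_cons, ih, pow_succ']
        rw [mul_assoc]
  rw [← hFp (M i j)]
  apply Equiv.ext
  rintro ⟨t, e⟩
  rw [Fp_apply, prod_altW_rel]
  have hdt : (ris (altW i j (2 * M i j))).drop (M i j) = (ris (altW i j (2 * M i j))).take (M i j) := by
    apply List.ext_getElem
    · simp; omega
    · intro n h1 h2
      simp only [List.length_drop, cs.length_rightInvSeq, altW_length] at h1
      have hn : n < M i j := by omega
      rw [List.getElem_drop, List.getElem_take]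
      rw [← List.getD_eq_getElem _ 1, ← List.getD_eq_getElem _ 1]
      rw [show M i j + n = n + M i j by omega]
      exact braid_period cs i j n hn
  have hcnt : (cnt t (ris (altW i j (2 * M i j))) : ZMod 2) = 0 := by
    conv_lhs => rw [← List.take_append_drop (M i j) (ris (altW i j (2 * M i j))), cnt_append, hdt]
    push_cast
    rw [← two_mul, show (2 : ZMod 2) = 0 by decide, zero_mul]
  rw [hcnt]
  simp

/-- The sign representation `η : W →* Perm (W × ZMod 2)`. -/
noncomputable def eta : W →* Equiv.Perm (W × ZMod 2) :=
  cs.lift ⟨fun i => fperm cs i, fperm_liftable cs⟩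

lemma eta_simple (i : B) : eta cs (s i) = fperm cs i :=
  cs.lift_apply_simple (fperm_liftable cs) i

lemma eta_wordProd (ω : List B) : eta cs (π ω) = Fp cs ω := by
  induction ω with
  | nil => simp [Fp]
  | cons i ω ih => rw [cs.wordProd_cons, map_mul, eta_simple, ih, Fp_cons]

lemma cnt_parity {ω ω' : List B} (h : π ω = π ω') (t : W) :
    (cnt t (ris ω) : ZMod 2) = (cnt t (ris ω') : ZMod 2) := by
  have hF : Fp cs ω = Fp cs ω' := by rw [← eta_wordProd, ← eta_wordProd, h]
  have := congrArg (fun (z : Equiv.Perm (W × ZMod 2)) => (z (t, 0)).2) hF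
  simpa [Fp_apply] using this

/-- **The (right) exchange property.** -/
theorem exchange {ω : List B} (hred : cs.IsReduced ω) {i : B}
    (hdesc : cs.IsRightDescent (π ω) i) :
    ∃ k, ∃ _h : k < ω.length, π ω * s i = π (ω.eraseIdx k) := by
  obtain ⟨τ, hτred, hτ⟩ := cs.exists_reduced_word' (π ω * s i)
  have hπσ : π (τ ++ [i]) = π ω := by
    rw [cs.wordProd_append, ← hτ, cs.wordProd_singleton, cs.simple_mul_simple_cancel_right]
  have hdesc' := (cs.isRightDescent_iff).mp hdesc
  have hσred : cs.IsReduced (τ ++ [i]) := by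
    unfold CoxeterSystem.IsReduced
    rw [hπσ, List.length_append, List.length_singleton, ← hτred, ← hτ]
    omega
  have hmem : s i ∈ ris (τ ++ [i]) := by
    rw [← List.concat_eq_append, cs.rightInvSeq_concat]
    simp
  have hcnt1 : cnt (s i) (ris (τ ++ [i])) = 1 :=
    cnt_eq_one_of_nodup_mem hσred.nodup_rightInvSeq hmem
  have hpar := cnt_parity cs hπσ (s i)
  rw [hcnt1] at hpar
  have hpos : 0 < cnt (s i) (ris ω) := by
    rcases Nat.eq_zero_or_pos (cnt (s i) (ris ω)) with h0 | h
    · rw [h0] at hpar; simp at hpar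
    · exact h
  obtain ⟨k, hk, hget⟩ := List.mem_iff_getElem.mp (mem_of_cnt_pos hpos)
  rw [cs.length_rightInvSeq] at hk
  refine ⟨k, hk, ?_⟩
  have h2 := cs.wordProd_mul_getD_rightInvSeq ω k
  rwa [List.getD_eq_getElem _ 1 (by simpa using hk), hget] at h2

end CoxExchange

namespace CoxExchange

variable {B : Type*} {W : Type*} [Group W] {M : CoxeterMatrix B} (cs : CoxeterSystem M W)

local prefix:100 "s" => cs.simple
local prefix:100 "π" => cs.wordProd
local prefix:100 "ℓ" => cs.length

/-- The standard parabolic subgroup generated by `{s i : i ∈ J}`. -/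
def sgp (J : Set B) : Subgroup W := Subgroup.closure {x | ∃ i ∈ J, x = s i}

/-- All letters of `ω` lie in `J`. -/
def WordIn (J : Set B) (ω : List B) : Prop := ∀ i ∈ ω, i ∈ J

lemma WordIn.sublist {J : Set B} {ω ω' : List B} (h : WordIn J ω) (hsub : ω' ⊆ ω) :
    WordIn J ω' := fun i hi => h i (hsub hi)

lemma simple_mem_sgp {J : Set B} {i : B} (hi : i ∈ J) : s i ∈ sgp cs J :=
  Subgroup.subset_closure ⟨i, hi, rfl⟩

lemma wordProd_mem_sgp {J : Set B} {ω : List B} (h : WordIn J ω) : π ω ∈ sgp cs J := by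
  induction ω with
  | nil => simpa using (sgp cs J).one_mem
  | cons i ω ih =>
      rw [cs.wordProd_cons]
      exact mul_mem (simple_mem_sgp cs (h i List.mem_cons_self))
        (ih fun j hj => h j (List.mem_cons_of_mem i hj))

lemma mem_sgp_iff {J : Set B} {w : W} :
    w ∈ sgp cs J ↔ ∃ ω : List B, WordIn J ω ∧ w = π ω := by
  constructor
  · intro hw
    induction hw using Subgroup.closure_induction with
    | mem x hx => obtain ⟨i, hi, rfl⟩ := hx; exact ⟨[i], by simpa [WordIn] using hi, by simp⟩
    | one => exact ⟨[], by simp [WordIn], by simp⟩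
    | mul x y hx hy ihx ihy =>
        obtain ⟨ω₁, h1, rfl⟩ := ihx
        obtain ⟨ω₂, h2, rfl⟩ := ihy
        exact ⟨ω₁ ++ ω₂, fun i hi => (List.mem_append.mp hi).elim (h1 i) (h2 i),
          by rw [cs.wordProd_append]⟩
    | inv x hx ihx =>
        obtain ⟨ω, h1, rfl⟩ := ihx
        exact ⟨ω.reverse, fun i hi => h1 i (List.mem_reverse.mp hi), by rw [cs.wordProd_reverse]⟩
  · rintro ⟨ω, hω, rfl⟩
    exact wordProd_mem_sgp cs hω

lemma sgp_mono {J J' : Set B} (h : J ⊆ J') : sgp cs J ≤ sgp cs J' :=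
  Subgroup.closure_mono (by rintro x ⟨i, hi, rfl⟩; exact ⟨i, h hi, rfl⟩)

/-- Every element of a standard parabolic subgroup has a reduced word with letters
in the parabolic generating set. -/
lemma exists_reduced_wordIn {J : Set B} {w : W} (hw : w ∈ sgp cs J) :
    ∃ ω : List B, cs.IsReduced ω ∧ WordIn J ω ∧ w = π ω := by
  obtain ⟨ω₀, hω₀, rfl⟩ := (mem_sgp_iff cs).mp hw
  clear hw
  induction ω₀ with
  | nil => exact ⟨[], by simp [CoxeterSystem.IsReduced], by simp [WordIn], rfl⟩
  | cons k ρ ih =>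
      obtain ⟨τ, hτred, hτJ, hτ⟩ := ih (fun i hi => hω₀ i (List.mem_cons_of_mem k hi))
      have hkJ : k ∈ J := hω₀ k List.mem_cons_self
      rw [cs.wordProd_cons, hτ]
      by_cases hred : cs.IsLeftDescent (π τ) k
      · -- use left exchange via reversal
        have hrev : cs.IsRightDescent (π τ.reverse) k := by
          rw [cs.wordProd_reverse]
          exact cs.isRightDescent_inv_iff.mpr hred
        obtain ⟨m, hm, he⟩ := exchange cs ((cs.isReduced_reverse_iff τ).mpr hτred) hrev
        refine ⟨(τ.reverse.eraseIdx m).reverse, ?_, ?_, ?_⟩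
        · unfold CoxeterSystem.IsReduced
          have h1 : π (τ.reverse.eraseIdx m).reverse = s k * π τ := by
            rw [cs.wordProd_reverse, ← he, mul_inv_rev, cs.inv_simple, cs.wordProd_reverse,
              inv_inv]
          rw [h1]
          have h2 := cs.isLeftDescent_iff.mp hred
          have h3 : (τ.reverse.eraseIdx m).reverse.length = τ.length - 1 := by
            have := List.length_eraseIdx_add_one (by simpa using hm :
              m < τ.reverse.length)
            simp only [List.length_reverse] at this ⊢
            omega
          rw [h3, ← hτred]
          omega
        · intro i hi
          apply hτJ
          have : i ∈ τ.reverse.eraseIdx m := List.mem_reverse.mp hi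
          exact List.mem_reverse.mp (List.eraseIdx_subset this)
        · rw [cs.wordProd_reverse, ← he, mul_inv_rev, cs.inv_simple, cs.wordProd_reverse,
            inv_inv]
      · -- k :: τ is reduced
        refine ⟨k :: τ, ?_, ?_, by rw [cs.wordProd_cons]⟩
        · unfold CoxeterSystem.IsReduced
          rw [cs.wordProd_cons]
          have := cs.not_isLeftDescent_iff.mp hred
          rw [this, List.length_cons, ← hτred]
        · intro i hi
          rcases List.mem_cons.mp hi with rfl | h
          · exact hkJ
          · exact hτJ i h

variable (hinj : Function.Injective cs.simple)

include hinj in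
/-- If `w` lies in the parabolic subgroup on `J` and `i ∉ J`, then `i` is not a right
descent of `w`. -/
lemma not_isRightDescent_of_not_mem {J : Set B} {w : W} (hw : w ∈ sgp cs J) {i : B}
    (hi : i ∉ J) : ¬ cs.IsRightDescent w i := by
  intro hdesc
  obtain ⟨ω, hred, hJ, rfl⟩ := exists_reduced_wordIn cs hw
  obtain ⟨k, hk, he⟩ := exchange cs hred hdesc
  have hsi : s i = π (ω.reverse ++ ω.eraseIdx k) := by
    rw [cs.wordProd_append, cs.wordProd_reverse, ← he]
    group
  have hmem : s i ∈ sgp cs J := by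
    rw [hsi]
    apply wordProd_mem_sgp
    intro j hj
    rcases List.mem_append.mp hj with h | h
    · exact hJ j (List.mem_reverse.mp h)
    · exact hJ j (List.eraseIdx_subset h)
  obtain ⟨ρ, hρred, hρJ, hρ⟩ := exists_reduced_wordIn cs hmem
  have hlen : ρ.length = 1 := by
    have := hρred
    unfold CoxeterSystem.IsReduced at this
    rw [← hρ, cs.length_simple] at this
    omega
  obtain ⟨j, rfl⟩ := List.length_eq_one_iff.mp hlen
  have : s j = s i := by rw [← cs.wordProd_singleton, ← hρ]
  exact hi (hinj this ▸ hρJ j (List.mem_singleton_self j))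

include hinj in
lemma mem_of_isRightDescent {J : Set B} {w : W} (hw : w ∈ sgp cs J) {i : B}
    (hdesc : cs.IsRightDescent w i) : i ∈ J := by
  by_contra hi
  exact not_isRightDescent_of_not_mem cs hinj hw hi hdesc

include hinj in
/-- Intersection of standard parabolic subgroups. -/
lemma mem_sgp_inter {J₁ J₂ : Set B} {w : W} (h1 : w ∈ sgp cs J₁) (h2 : w ∈ sgp cs J₂) :
    w ∈ sgp cs (J₁ ∩ J₂) := by
  suffices H : ∀ n (w : W), ℓ w = n → w ∈ sgp cs J₁ → w ∈ sgp cs J₂ → w ∈ sgp cs (J₁ ∩ J₂) from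
    H (ℓ w) w rfl h1 h2
  intro n
  induction n using Nat.strong_induction_on with
  | _ n ih =>
      intro w hn h1 h2
      by_cases hw1 : w = 1
      · subst hw1; exact (sgp cs _).one_mem
      · obtain ⟨i, hdesc⟩ := cs.exists_rightDescent_of_ne_one hw1
        have hi1 : i ∈ J₁ := mem_of_isRightDescent cs hinj h1 hdesc
        have hi2 : i ∈ J₂ := mem_of_isRightDescent cs hinj h2 hdesc
        have hws1 : w * s i ∈ sgp cs J₁ := mul_mem h1 (simple_mem_sgp cs hi1)
        have hws2 : w * s i ∈ sgp cs J₂ := mul_mem h2 (simple_mem_sgp cs hi2)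
        have hlt : ℓ (w * s i) < n := by
          have := cs.isRightDescent_iff.mp hdesc
          omega
        have hmem := ih _ hlt _ rfl hws1 hws2
        have : w = (w * s i) * s i := by rw [cs.simple_mul_simple_cancel_right]
        rw [this]
        exact mul_mem hmem (simple_mem_sgp cs ⟨hi1, hi2⟩)

end CoxExchange

namespace CoxExchange

variable {B : Type*} {W : Type*} [Group W] {M : CoxeterMatrix B} (cs : CoxeterSystem M W)

local prefix:100 "s" => cs.simple
local prefix:100 "π" => cs.wordProd
local prefix:100 "ℓ" => cs.length

/-- Additivity of length on cosets of parabolic subgroups, for a minimal-length coset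
representative. -/
lemma length_mul_eq_of_min {J : Set B} {w₀ : W}
    (hmin : ∀ u ∈ sgp cs J, ℓ w₀ ≤ ℓ (w₀ * u)) :
    ∀ u ∈ sgp cs J, ℓ (w₀ * u) = ℓ w₀ + ℓ u := by
  suffices H : ∀ n (u : W), ℓ u = n → u ∈ sgp cs J → ℓ (w₀ * u) = ℓ w₀ + ℓ u from
    fun u hu => H (ℓ u) u rfl hu
  intro n
  induction n using Nat.strong_induction_on with
  | _ n ih =>
      intro u hn hu
      by_cases hu1 : u = 1
      · subst hu1; simp
      · obtain ⟨τ, hτred, hτJ, hτ⟩ := exists_reduced_wordIn cs hu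
        have hτne : τ ≠ [] := by
          rintro rfl
          exact hu1 (by simpa using hτ)
        rcases List.eq_nil_or_concat τ with rfl | ⟨σ, j, rfl⟩
        · exact absurd rfl hτne
        rw [List.concat_eq_append] at *
        have hσred : cs.IsReduced σ := by
          have := CoxeterSystem.IsReduced.take hτred σ.length
          rwa [List.take_left] at this
        set u' := π σ with hu'
        have hju : u = u' * s j := by
          rw [hτ, cs.wordProd_append, cs.wordProd_singleton]
        have hlσ : ℓ u' = σ.length := hσred
        have hlτ : ℓ u = σ.length + 1 := by
          rw [hτ]
          have := hτred
          unfold CoxeterSystem.IsReduced at this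
          rw [this]
          simp
        have hjJ : j ∈ J := hτJ j (by simp)
        have hu'J : u' ∈ sgp cs J := wordProd_mem_sgp cs fun i hi => hτJ i (by simp [hi])
        have hIH : ℓ (w₀ * u') = ℓ w₀ + ℓ u' := ih (ℓ u') (by omega) u' rfl hu'J
        -- key claim: j is not a right descent of w₀ * u'
        have hnd : ¬ cs.IsRightDescent (w₀ * u') j := by
          intro hdesc
          obtain ⟨ρ, hρred, hρ⟩ := cs.exists_reduced_word' w₀
          have hρσred : cs.IsReduced (ρ ++ σ) := by
            have hρlen : ℓ w₀ = ρ.length := by rw [hρ]; exact hρred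
            unfold CoxeterSystem.IsReduced
            rw [cs.wordProd_append, ← hρ, ← hu', List.length_append, hIH, hlσ, hρlen]
          have hπρσ : π (ρ ++ σ) = w₀ * u' := by rw [cs.wordProd_append, ← hρ]
          rw [← hπρσ] at hdesc
          obtain ⟨k, hk, he⟩ := exchange cs hρσred hdesc
          rw [hπρσ] at he
          by_cases hcase : k < ρ.length
          · rw [List.eraseIdx_append_of_lt_length hcase] at he
            rw [cs.wordProd_append, ← hu'] at he
            have hkey : w₀ * (u' * s j * u'⁻¹) = π (ρ.eraseIdx k) := by
              have h5 : w₀ * (u' * s j * u'⁻¹) = (w₀ * u' * s j) * u'⁻¹ := by group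
              rw [h5, he]
              group
            have hmem' : u' * s j * u'⁻¹ ∈ sgp cs J :=
              mul_mem (mul_mem hu'J (simple_mem_sgp cs hjJ)) (inv_mem hu'J)
            have h1 := hmin _ hmem'
            rw [hkey] at h1
            have h2 : ℓ (π (ρ.eraseIdx k)) ≤ (ρ.eraseIdx k).length :=
              cs.length_wordProd_le _
            have h3 : (ρ.eraseIdx k).length + 1 = ρ.length :=
              List.length_eraseIdx_add_one hcase
            have h4 : ρ.length = ℓ w₀ := by rw [← hρred, hρ]
            omega
          · push_neg at hcase
            rw [List.eraseIdx_append_of_length_le hcase] at he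
            have hkey : u' * s j = π (σ.eraseIdx (k - ρ.length)) := by
              have : π ρ * (u' * s j) = π ρ * π (σ.eraseIdx (k - ρ.length)) := by
                rw [← cs.wordProd_append, ← he, ← hρ]
                group
              exact mul_left_cancel this
            have h2 : ℓ (u' * s j) ≤ (σ.eraseIdx (k - ρ.length)).length := by
              rw [hkey]; exact cs.length_wordProd_le _
            have hk' : k - ρ.length < σ.length := by
              rw [List.length_append] at hk
              omega
            have h3 : (σ.eraseIdx (k - ρ.length)).length + 1 = σ.length :=
              List.length_eraseIdx_add_one hk'
            rw [← hju] at h2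
            omega
        have hts := cs.not_isRightDescent_iff.mp hnd
        have hfin : ℓ (w₀ * u) = ℓ (w₀ * u') + 1 := by
          rw [hju, ← mul_assoc]
          exact hts
        omega

/-- A minimal length representative of the coset `w · sgp J` exists. -/
lemma exists_min_rep (w : W) (J : Set B) :
    ∃ w₀ : W, w⁻¹ * w₀ ∈ sgp cs J ∧ ∀ v : W, w⁻¹ * v ∈ sgp cs J → ℓ w₀ ≤ ℓ v := by
  classical
  set S : Set ℕ := {n | ∃ v : W, w⁻¹ * v ∈ sgp cs J ∧ ℓ v = n} with hS
  have hne : S.Nonempty := ⟨ℓ w, w, by simp [(sgp cs J).one_mem], rfl⟩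
  obtain ⟨v₀, hv₀, hlv₀⟩ := Nat.sInf_mem hne
  refine ⟨v₀, hv₀, fun v hv => ?_⟩
  rw [hlv₀]
  exact Nat.sInf_le ⟨v, hv, rfl⟩

variable (hinj : Function.Injective cs.simple)

include hinj in
/-- If no element of `J` is a right descent of `w`, then lengths add:
`ℓ(w u) = ℓ(w) + ℓ(u)` for all `u` in the parabolic subgroup on `J`. -/
theorem length_mul_of_noDescent {J : Set B} {w : W}
    (hnd : ∀ i ∈ J, ¬ cs.IsRightDescent w i) :
    ∀ u ∈ sgp cs J, ℓ (w * u) = ℓ w + ℓ u := by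
  obtain ⟨w₀, hw₀mem, hw₀min⟩ := exists_min_rep cs w J
  have hmin : ∀ u ∈ sgp cs J, ℓ w₀ ≤ ℓ (w₀ * u) := by
    intro u hu
    apply hw₀min
    have : w⁻¹ * (w₀ * u) = (w⁻¹ * w₀) * u := by group
    rw [this]
    exact mul_mem hw₀mem hu
  have hadd := length_mul_eq_of_min cs hmin
  set x := w₀⁻¹ * w with hx
  have hxmem : x ∈ sgp cs J := by
    have := inv_mem hw₀mem
    rwa [mul_inv_rev, inv_inv] at this
  have hwx : w₀ * x = w := by rw [hx]; group
  have hx1 : x = 1 := by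
    by_contra hx1
    obtain ⟨i, hdesc⟩ := cs.exists_rightDescent_of_ne_one hx1
    have hiJ : i ∈ J := mem_of_isRightDescent cs hinj hxmem hdesc
    have h1 : ℓ w = ℓ w₀ + ℓ x := by rw [← hwx]; exact hadd x hxmem
    have h2 : ℓ (w * s i) = ℓ w₀ + ℓ (x * s i) := by
      have : w * s i = w₀ * (x * s i) := by rw [← hwx]; group
      rw [this]
      exact hadd _ (mul_mem hxmem (simple_mem_sgp cs hiJ))
    have h3 := cs.isRightDescent_iff.mp hdesc
    exact hnd i hiJ (by unfold CoxeterSystem.IsRightDescent; omega)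
  have hww₀ : w = w₀ := by rw [← hwx, hx1, mul_one]
  rw [hww₀]
  exact hadd

include hinj in
theorem length_le_mul_of_noDescent {J : Set B} {w : W}
    (hnd : ∀ i ∈ J, ¬ cs.IsRightDescent w i) {u : W} (hu : u ∈ sgp cs J) :
    ℓ w ≤ ℓ (w * u) := by
  have := length_mul_of_noDescent cs hinj hnd u hu
  omega

/-- Elements of parabolic subgroups with entrywise-commuting generators commute. -/
lemma commute_sgp {J₁ J₂ : Set B} (hcomm : ∀ i ∈ J₁, ∀ j ∈ J₂, Commute (s i) (s j))
    {x y : W} (hx : x ∈ sgp cs J₁) (hy : y ∈ sgp cs J₂) : Commute x y := by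
  have h1 : ∀ j ∈ J₂, ∀ x ∈ sgp cs J₁, Commute x (s j) := by
    intro j hj x hx
    induction hx using Subgroup.closure_induction with
    | mem z hz => obtain ⟨i, hi, rfl⟩ := hz; exact hcomm i hi j hj
    | one => exact Commute.one_left _
    | mul a b _ _ iha ihb => exact iha.mul_left ihb
    | inv a _ iha => exact iha.inv_left
  induction hy using Subgroup.closure_induction with
  | mem z hz => obtain ⟨j, hj, rfl⟩ := hz; exact h1 j hj x hx
  | one => exact Commute.one_right _
  | mul a b _ _ iha ihb => exact iha.mul_right ihb
  | inv a _ iha => exact iha.inv_right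

/-- Splitting off commuting parabolic factors. -/
lemma split_commuting {J₁ J₂ : Set B} (hcomm : ∀ i ∈ J₁, ∀ j ∈ J₂, Commute (s i) (s j))
    {w : W} (hw : w ∈ sgp cs (J₁ ∪ J₂)) :
    ∃ x ∈ sgp cs J₁, ∃ y ∈ sgp cs J₂, w = x * y := by
  obtain ⟨ω, hω, rfl⟩ := (mem_sgp_iff cs).mp hw
  clear hw
  induction ω with
  | nil => exact ⟨1, (sgp cs J₁).one_mem, 1, (sgp cs J₂).one_mem, by simp⟩
  | cons i ω ih =>
      obtain ⟨x, hx, y, hy, hxy⟩ := ih fun j hj => hω j (List.mem_cons_of_mem i hj)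
      rcases hω i List.mem_cons_self with hi | hi
      · exact ⟨s i * x, mul_mem (simple_mem_sgp cs hi) hx, y, hy,
          by rw [cs.wordProd_cons, hxy, mul_assoc]⟩
      · refine ⟨x, hx, s i * y, mul_mem (simple_mem_sgp cs hi) hy, ?_⟩
        rw [cs.wordProd_cons, hxy]
        have hc : Commute x (s i) := commute_sgp cs hcomm hx (simple_mem_sgp cs hi)
        rw [← mul_assoc, ← hc.eq, mul_assoc]

end CoxExchange

namespace CoxExchange

section Concrete

variable {g : ℕ}

/-- The generalized Cartan matrix of affine type `C̃_g`. -/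
def A (g : ℕ) (i j : Fin (g+1)) : ℤ :=
  if i = j then 2
  else if (i : ℕ) + 1 = (j : ℕ) ∨ (j : ℕ) + 1 = (i : ℕ) then
    (if ((i : ℕ) = 1 ∧ (j : ℕ) = 0) ∨ ((i : ℕ) = g - 1 ∧ (j : ℕ) = g) then -2 else -1)
  else 0

@[simp] lemma A_diag (i : Fin (g+1)) : A g i i = 2 := by simp [A]

/-- The reflection representation attached to `A`. -/
def sig (g : ℕ) (i : Fin (g+1)) : Function.End (Fin (g+1) → ℤ) :=
  fun v k => v k - (if k = i then (∑ l, A g i l * v l) else 0)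

/-- `v` shifted by `x` at `i` and by `y` at `j`. -/
def Tv (i j : Fin (g+1)) (x y : ℤ) (v : Fin (g+1) → ℤ) : Fin (g+1) → ℤ :=
  fun k => v k + (if k = i then x else 0) + (if k = j then y else 0)

lemma Tv_comm (i j : Fin (g+1)) (x y : ℤ) (v : Fin (g+1) → ℤ) :
    Tv i j x y v = Tv j i y x v := by
  funext k
  unfold Tv
  ring

lemma Tv_zero (i j : Fin (g+1)) (v : Fin (g+1) → ℤ) : Tv i j 0 0 v = v := by
  funext k
  simp [Tv]

lemma sum_A_Tv (i j m : Fin (g+1)) (hij : i ≠ j) (x y : ℤ) (v : Fin (g+1) → ℤ) :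
    (∑ l, A g m l * Tv i j x y v l) = (∑ l, A g m l * v l) + A g m i * x + A g m j * y := by
  unfold Tv
  simp only [mul_add, Finset.sum_add_distrib, mul_ite, mul_zero]
  rw [Finset.sum_ite_eq' Finset.univ i (fun l => A g m l * x),
    Finset.sum_ite_eq' Finset.univ j (fun l => A g m l * y)]
  simp

lemma stepL (i j : Fin (g+1)) (hij : i ≠ j) (x y : ℤ) (v : Fin (g+1) → ℤ) :
    sig g i (Tv i j x y v) = Tv i j (-x - A g i j * y - (∑ l, A g i l * v l)) y v := by
  funext k
  show Tv i j x y v k - _ = _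
  rw [sum_A_Tv i j i hij x y v]
  unfold Tv
  by_cases hk : k = i
  · subst hk
    simp only [if_neg hij, eq_self_iff_true, if_true, add_zero, A_diag]
    ring
  · simp only [if_neg hk]
    by_cases hk2 : k = j
    · simp only [if_pos hk2]
      ring
    · simp only [if_neg hk2]
      ring

lemma stepR (i j : Fin (g+1)) (hij : i ≠ j) (x y : ℤ) (v : Fin (g+1) → ℤ) :
    sig g j (Tv i j x y v) = Tv i j x (-y - A g j i * x - (∑ l, A g j l * v l)) v := by
  rw [Tv_comm, stepL j i hij.symm y x v, Tv_comm]

lemma sum_A_sig (i : Fin (g+1)) (v : Fin (g+1) → ℤ) :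
    (∑ l, A g i l * (sig g i v) l) = - (∑ l, A g i l * v l) := by
  unfold sig
  simp only [mul_sub, Finset.sum_sub_distrib, mul_ite, mul_zero]
  rw [Finset.sum_ite_eq' Finset.univ i (fun l => A g i l * (∑ l', A g i l' * v l'))]
  simp only [Finset.mem_univ, if_pos, A_diag]
  ring

lemma sig_sq (i : Fin (g+1)) : sig g i * sig g i = 1 := by
  apply funext
  intro v
  show sig g i (sig g i v) = v
  funext k
  show sig g i v k - _ = v k
  rw [sum_A_sig i v]
  unfold sig
  split_ifs <;> ring

lemma Tv_congr (i j : Fin (g+1)) (v : Fin (g+1) → ℤ) :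
    ∀ x y : ℤ, x = 0 → y = 0 → Tv i j x y v = Tv i j 0 0 v := by
  rintro x y rfl rfl
  rfl

lemma sig_ord2 (i j : Fin (g+1)) (hij : i ≠ j) (h0 : A g i j = 0) (h0' : A g j i = 0) :
    (sig g i * sig g j) ^ 2 = 1 := by
  apply funext
  intro v
  show sig g i (sig g j (sig g i (sig g j v))) = v
  rw [← Tv_zero i j v]
  rw [stepR i j hij, stepL i j hij, stepR i j hij, stepL i j hij, h0, h0']
  apply Tv_congr <;> ring

lemma sig_ord3 (i j : Fin (g+1)) (hij : i ≠ j) (ha : A g i j = -1) (hb : A g j i = -1) :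
    (sig g i * sig g j) ^ 3 = 1 := by
  apply funext
  intro v
  show sig g i (sig g j (sig g i (sig g j (sig g i (sig g j v))))) = v
  rw [← Tv_zero i j v]
  rw [stepR i j hij, stepL i j hij, stepR i j hij, stepL i j hij, stepR i j hij,
    stepL i j hij, ha, hb]
  apply Tv_congr <;> ring

lemma sig_ord4 (i j : Fin (g+1)) (hij : i ≠ j) (ha : A g i j = -1) (hb : A g j i = -2) :
    (sig g i * sig g j) ^ 4 = 1 := by
  apply funext
  intro v
  show sig g i (sig g j (sig g i (sig g j (sig g i (sig g j (sig g i (sig g j v))))))) = v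
  rw [← Tv_zero i j v]
  rw [stepR i j hij, stepL i j hij, stepR i j hij, stepL i j hij, stepR i j hij,
    stepL i j hij, stepR i j hij, stepL i j hij, ha, hb]
  apply Tv_congr <;> ring

lemma sig_ord4' (i j : Fin (g+1)) (hij : i ≠ j) (ha : A g i j = -2) (hb : A g j i = -1) :
    (sig g i * sig g j) ^ 4 = 1 := by
  apply funext
  intro v
  show sig g i (sig g j (sig g i (sig g j (sig g i (sig g j (sig g i (sig g j v))))))) = v
  rw [← Tv_zero i j v]
  rw [stepR i j hij, stepL i j hij, stepR i j hij, stepL i j hij, stepR i j hij,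
    stepL i j hij, stepR i j hij, stepL i j hij, ha, hb]
  apply Tv_congr <;> ring

lemma A_of_adj (i j : Fin (g+1)) (hij : i ≠ j)
    (hadj : (i : ℕ) + 1 = (j : ℕ) ∨ (j : ℕ) + 1 = (i : ℕ)) :
    A g i j = if ((i : ℕ) = 1 ∧ (j : ℕ) = 0) ∨ ((i : ℕ) = g - 1 ∧ (j : ℕ) = g) then -2 else -1 := by
  simp [A, hij, hadj]

lemma A_of_nonadj (i j : Fin (g+1)) (hij : i ≠ j)
    (hadj : ¬ ((i : ℕ) + 1 = (j : ℕ) ∨ (j : ℕ) + 1 = (i : ℕ))) :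
    A g i j = 0 := by
  simp [A, hij, hadj]

end Concrete

end CoxExchange

namespace CoxExchange

section Inj

variable {W : Type*} [Group W] {g : ℕ} {M : CoxeterMatrix (Fin (g + 1))}

lemma sig_liftable (g_pos : 2 ≤ g)
    (hM : ∀ i j : Fin (g + 1), M.M i j =
      if i = j then 1
      else if (i : ℕ) + 1 = (j : ℕ) ∨ (j : ℕ) + 1 = (i : ℕ) then
        (if min (i : ℕ) (j : ℕ) = 0 ∨ max (i : ℕ) (j : ℕ) = g then 4 else 3)
      else 2) :
    M.IsLiftable (sig g) := by
  intro i j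
  rw [show M.M i j = M i j from rfl, hM i j]
  by_cases hij : i = j
  · subst hij
    rw [if_pos rfl, pow_one]
    exact sig_sq i
  · have hvij : (i : ℕ) ≠ (j : ℕ) := fun h => hij (Fin.val_injective h)
    rw [if_neg hij]
    by_cases hadj : (i : ℕ) + 1 = (j : ℕ) ∨ (j : ℕ) + 1 = (i : ℕ)
    · rw [if_pos hadj]
      have hadj' : (j : ℕ) + 1 = (i : ℕ) ∨ (i : ℕ) + 1 = (j : ℕ) := hadj.symm
      have hAij := A_of_adj i j hij hadj
      have hAji := A_of_adj j i (Ne.symm hij) hadj'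
      have hi_le : (i : ℕ) ≤ g := Nat.lt_succ_iff.mp i.isLt
      have hj_le : (j : ℕ) ≤ g := Nat.lt_succ_iff.mp j.isLt
      by_cases hend : min (i : ℕ) (j : ℕ) = 0 ∨ max (i : ℕ) (j : ℕ) = g
      · rw [if_pos hend]
        have hcases : ((i:ℕ) = 0 ∧ (j:ℕ) = 1) ∨ ((i:ℕ) = 1 ∧ (j:ℕ) = 0)
            ∨ ((i:ℕ) = g - 1 ∧ (j:ℕ) = g) ∨ ((i:ℕ) = g ∧ (j:ℕ) = g - 1) := by omega
        rcases hcases with ⟨h1, h2⟩ | ⟨h1, h2⟩ | ⟨h1, h2⟩ | ⟨h1, h2⟩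
        · rw [if_neg (by omega)] at hAij
          rw [if_pos (by omega)] at hAji
          exact sig_ord4 i j hij hAij hAji
        · rw [if_pos (by omega)] at hAij
          rw [if_neg (by omega)] at hAji
          exact sig_ord4' i j hij hAij hAji
        · rw [if_pos (by omega)] at hAij
          rw [if_neg (by omega)] at hAji
          exact sig_ord4' i j hij hAij hAji
        · rw [if_neg (by omega)] at hAij
          rw [if_pos (by omega)] at hAji
          exact sig_ord4 i j hij hAij hAji
      · rw [if_neg hend]
        rw [if_neg (by omega)] at hAij
        rw [if_neg (by omega)] at hAji
        exact sig_ord3 i j hij hAij hAji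
    · rw [if_neg hadj]
      have hadj' : ¬ ((j : ℕ) + 1 = (i : ℕ) ∨ (i : ℕ) + 1 = (j : ℕ)) := fun h => hadj h.symm
      exact sig_ord2 i j hij (A_of_nonadj i j hij hadj) (A_of_nonadj j i (Ne.symm hij) hadj')

lemma simple_injective (cs : CoxeterSystem M W) (g_pos : 2 ≤ g)
    (hM : ∀ i j : Fin (g + 1), M.M i j =
      if i = j then 1
      else if (i : ℕ) + 1 = (j : ℕ) ∨ (j : ℕ) + 1 = (i : ℕ) then
        (if min (i : ℕ) (j : ℕ) = 0 ∨ max (i : ℕ) (j : ℕ) = g then 4 else 3)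
      else 2) :
    Function.Injective cs.simple := by
  intro i j hs
  by_contra hij
  have h1 := cs.lift_apply_simple (sig_liftable g_pos hM) i
  have h2 := cs.lift_apply_simple (sig_liftable g_pos hM) j
  rw [hs, h2] at h1
  -- h1 : sig g j = sig g i  (check direction below)
  set δ : Fin (g+1) → ℤ := fun k => if k = i then 1 else 0 with hδ
  have hSi : (∑ l, A g i l * δ l) = 2 := by
    rw [hδ]
    simp only [mul_ite, mul_one, mul_zero]
    rw [Finset.sum_ite_eq' Finset.univ i (fun l => A g i l)]
    simp
  have e1 : sig g i δ i = -1 := by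
    show δ i - _ = -1
    rw [if_pos rfl, hSi, hδ]
    simp
  have e2 : sig g j δ i = 1 := by
    show δ i - _ = 1
    rw [if_neg hij, hδ]
    simp
  rw [h1] at e2
  omega

end Inj

end CoxExchange


namespace CoxExchange

variable {B : Type*} {W : Type*} [Group W] {M : CoxeterMatrix B} (cs : CoxeterSystem M W)

lemma commute_simple_of_M_two {i j : B} (h2 : M.M i j = 2) :
    Commute (cs.simple i) (cs.simple j) := by
  have h2' : M i j = 2 := h2
  have h := cs.simple_mul_simple_pow i j
  rw [h2'] at h
  have hx : cs.simple i * cs.simple j = (cs.simple i * cs.simple j)⁻¹ := by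
    rw [eq_inv_iff_mul_eq_one, ← pow_two, h]
  rw [mul_inv_rev, cs.inv_simple, cs.inv_simple] at hx
  exact hx

end CoxExchange

theorem final_inter_parahoric (g_pos : 2 ≤ g) (c : ℕ) (hc : 2 * c ≤ g)
    {W : Type*} [Group W] {M : CoxeterMatrix (Fin (g + 1))}
    (hM : ∀ i j : Fin (g + 1), M.M i j =
      if i = j then 1
      else if (i : ℕ) + 1 = (j : ℕ) ∨ (j : ℕ) + 1 = (i : ℕ) then
        (if min (i : ℕ) (j : ℕ) = 0 ∨ max (i : ℕ) (j : ℕ) = g then 4 else 3)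
      else 2)
    (cs : CoxeterSystem M W) :
    finalIn cs (genBy cs {i | 1 ≤ i}) (genBy cs {i | 1 ≤ i ∧ i ≤ g - 1}) ∩
        (genBy cs {i | i ≠ c ∧ i ≠ g - c} : Set W) =
      finalIn cs (genBy cs {i | g - c + 1 ≤ i}) (genBy cs {i | g - c + 1 ≤ i ∧ i ≤ g - 1}) := by
  classical
  have hinj : Function.Injective cs.simple := CoxExchange.simple_injective cs g_pos hM
  have hcg : c ≤ g := by omega
  -- the index sets
  set JK : Set (Fin (g+1)) := {i | 1 ≤ (i : ℕ)} with hJK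
  set JP : Set (Fin (g+1)) := {i | 1 ≤ (i : ℕ) ∧ (i : ℕ) ≤ g - 1} with hJP
  set JQ : Set (Fin (g+1)) := {i | (i : ℕ) ≠ c ∧ (i : ℕ) ≠ g - c} with hJQ
  set JC : Set (Fin (g+1)) := {i | g - c + 1 ≤ (i : ℕ)} with hJC
  set JP' : Set (Fin (g+1)) := {i | g - c + 1 ≤ (i : ℕ) ∧ (i : ℕ) ≤ g - 1} with hJP'
  set JAB : Set (Fin (g+1)) := {i | 1 ≤ (i : ℕ) ∧ (i : ℕ) ≤ g - c - 1 ∧ (i : ℕ) ≠ c} with hJAB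
  have hgbK : genBy cs {i | 1 ≤ i} = CoxExchange.sgp cs JK := rfl
  have hgbP : genBy cs {i | 1 ≤ i ∧ i ≤ g - 1} = CoxExchange.sgp cs JP := rfl
  have hgbQ : genBy cs {i | i ≠ c ∧ i ≠ g - c} = CoxExchange.sgp cs JQ := rfl
  have hgbC : genBy cs {i | g - c + 1 ≤ i} = CoxExchange.sgp cs JC := rfl
  have hgbP' : genBy cs {i | g - c + 1 ≤ i ∧ i ≤ g - 1} = CoxExchange.sgp cs JP' := rfl
  have hCK : CoxExchange.sgp cs JC ≤ CoxExchange.sgp cs JK := by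
    apply CoxExchange.sgp_mono
    intro i hi
    simp only [hJC, Set.mem_setOf_eq] at hi
    simp only [hJK, Set.mem_setOf_eq]
    omega
  have hP'P : CoxExchange.sgp cs JP' ≤ CoxExchange.sgp cs JP := by
    apply CoxExchange.sgp_mono
    intro i hi
    simp only [hJP', Set.mem_setOf_eq] at hi
    simp only [hJP, Set.mem_setOf_eq]
    omega
  ext w
  simp only [Set.mem_inter_iff, finalIn, Set.mem_setOf_eq, hgbK, hgbP, hgbQ, hgbC, hgbP',
    SetLike.mem_coe]
  constructor
  · rintro ⟨⟨hwK, hwmin⟩, hwQ⟩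
    -- `w` has no right descents at `1, ..., g-1`
    have hnd : ∀ i : Fin (g+1), 1 ≤ (i : ℕ) → (i : ℕ) ≤ g - 1 → ¬ cs.IsRightDescent w i := by
      intro i h1 h2 hdesc
      have hv : w * cs.simple i ∈ CoxExchange.sgp cs JK :=
        mul_mem hwK (CoxExchange.simple_mem_sgp cs (by simp only [hJK, Set.mem_setOf_eq]; omega))
      have hp : w⁻¹ * (w * cs.simple i) ∈ CoxExchange.sgp cs JP := by
        rw [inv_mul_cancel_left]
        exact CoxExchange.simple_mem_sgp cs (by simp only [hJP, Set.mem_setOf_eq]; omega)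
      have hle := hwmin _ hv hp
      have hd := cs.isRightDescent_iff.mp hdesc
      omega
    have hwR : w ∈ CoxExchange.sgp cs (JK ∩ JQ) := CoxExchange.mem_sgp_inter cs hinj hwK hwQ
    have hsub : (JK ∩ JQ) ⊆ JAB ∪ JC := by
      rintro i ⟨h1, h2⟩
      simp only [hJK, Set.mem_setOf_eq] at h1
      simp only [hJQ, Set.mem_setOf_eq] at h2
      simp only [hJAB, hJC, Set.mem_union, Set.mem_setOf_eq]
      omega
    have hwABC : w ∈ CoxExchange.sgp cs (JAB ∪ JC) := CoxExchange.sgp_mono cs hsub hwR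
    have hcomm : ∀ i ∈ JAB, ∀ j ∈ JC, Commute (cs.simple i) (cs.simple j) := by
      intro i hi j hj
      simp only [hJAB, Set.mem_setOf_eq] at hi
      simp only [hJC, Set.mem_setOf_eq] at hj
      apply CoxExchange.commute_simple_of_M_two cs
      rw [hM i j, if_neg (by intro h; subst h; omega), if_neg (by omega)]
    obtain ⟨x, hx, y, hy, rfl⟩ := CoxExchange.split_commuting cs hcomm hwABC
    have hdisj : ∀ j ∈ JAB, j ∉ JC := by
      intro j hj
      simp only [hJAB, Set.mem_setOf_eq] at hj
      simp only [hJC, Set.mem_setOf_eq]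
      omega
    have hx1 : x = 1 := by
      by_contra hx1
      obtain ⟨i, hdesc⟩ := cs.exists_rightDescent_of_ne_one hx1
      have hiAB : i ∈ JAB := CoxExchange.mem_of_isRightDescent cs hinj hx hdesc
      have hcxy : Commute x y := CoxExchange.commute_sgp cs hcomm hx hy
      have hynd : ∀ jj ∈ JAB, ¬ cs.IsRightDescent y jj := fun jj hjj =>
        CoxExchange.not_isRightDescent_of_not_mem cs hinj hy (hdisj jj hjj)
      have hadd := CoxExchange.length_mul_of_noDescent cs hinj hynd
      have l1 : cs.length (x * y) = cs.length y + cs.length x := by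
        rw [hcxy.eq]
        exact hadd x hx
      have l2 : cs.length (x * y * cs.simple i) = cs.length y + cs.length (x * cs.simple i) := by
        have e : x * y * cs.simple i = y * (x * cs.simple i) := by
          rw [hcxy.eq, mul_assoc]
        rw [e]
        exact hadd _ (mul_mem hx (CoxExchange.simple_mem_sgp cs hiAB))
      have hd := cs.isRightDescent_iff.mp hdesc
      simp only [hJAB, Set.mem_setOf_eq] at hiAB
      refine hnd i (by omega) (by omega) ?_
      unfold CoxeterSystem.IsRightDescent
      omega
    rw [hx1, one_mul] at hwmin ⊢
    refine ⟨hy, ?_⟩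
    intro v hv hp
    exact hwmin v (hCK hv) (hP'P hp)
  · rintro ⟨hwC, hwmin'⟩
    have hndP : ∀ i ∈ JP, ¬ cs.IsRightDescent w i := by
      rintro i hi
      simp only [hJP, Set.mem_setOf_eq] at hi
      by_cases hcase : g - c + 1 ≤ (i : ℕ)
      · intro hdesc
        have hv : w * cs.simple i ∈ CoxExchange.sgp cs JC :=
          mul_mem hwC (CoxExchange.simple_mem_sgp cs
            (by simp only [hJC, Set.mem_setOf_eq]; omega))
        have hp : w⁻¹ * (w * cs.simple i) ∈ CoxExchange.sgp cs JP' := by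
          rw [inv_mul_cancel_left]
          exact CoxExchange.simple_mem_sgp cs
            (by simp only [hJP', Set.mem_setOf_eq]; exact ⟨hcase, hi.2⟩)
        have hle := hwmin' _ hv hp
        have hd := cs.isRightDescent_iff.mp hdesc
        omega
      · exact CoxExchange.not_isRightDescent_of_not_mem cs hinj hwC
          (by simp only [hJC, Set.mem_setOf_eq]; omega)
    refine ⟨⟨hCK hwC, ?_⟩, ?_⟩
    · intro v hv hp
      have hadd := CoxExchange.length_mul_of_noDescent cs hinj hndP (w⁻¹ * v) hp
      rw [mul_inv_cancel_left] at hadd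
      omega
    · refine CoxExchange.sgp_mono cs ?_ hwC
      intro i hi
      simp only [hJC, Set.mem_setOf_eq] at hi
      simp only [hJQ, Set.mem_setOf_eq]
      omega
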